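/- Let j ∈ ℕ, N = 2j+1, and let R : Fin N × Fin N → ℝ be an orthogonal matrix, i.e. Σ_{b} R_{ab}·R_{a'b} = δ_{aa'} for all a,a'. Define its discrete Fourier transform t_R : M² → ℂ by t_R(m₁,m₂) = N^{−2}·i^{−(2j−|m₁|−|m₂|)}·Σ_{a,b∈Fin N} R_{ab}·exp((2πi/N)(a m₁ + b m₂)). Then for all m₁, m₂ ∈ M: Σ_{m∈M} (−1)^{j−m}·t_R(m₁,m)·t_R(m₂,−m) = (1/N²)·(−1)^{j−m₁}·δ_{m₁,−m₂}. -/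

import Mathlib

open Finset

private lemma auxA' (N : ℕ) (hN : N ≠ 0) (k : ℤ) :
    ∑ a : Fin N, Complex.exp (2*Real.pi*Complex.I/N) ^ ((a:ℤ) * k)
      = if (N:ℤ) ∣ k then (N:ℂ) else 0 := by
  have he := Complex.isPrimitiveRoot_exp N hN
  set e : ℂ := Complex.exp (2*Real.pi*Complex.I/N) with hedef
  have hstep : ∀ a : Fin N, e ^ ((a:ℤ) * k) = (e ^ k) ^ (a : ℕ) := by
    intro a
    rw [mul_comm, zpow_mul, zpow_natCast]
  simp only [hstep]
  by_cases h : (N:ℤ) ∣ k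
  · have h1 : e ^ k = 1 := (he.zpow_eq_one_iff_dvd k).mpr h
    simp [h1, if_pos h]
  · have h1 : e ^ k ≠ 1 := fun hc => h ((he.zpow_eq_one_iff_dvd k).mp hc)
    have h2 : (e ^ k) ^ N = 1 := by
      rw [← zpow_natCast, ← zpow_mul, mul_comm, zpow_mul, zpow_natCast, he.pow_eq_one,
        one_zpow]
    rw [Fin.sum_univ_eq_sum_range, geom_sum_eq h1, h2]
    simp [h]

private lemma auxB' (j N : ℕ) (hN : N = 2*j+1) (k : ℤ) :
    ∑ m ∈ Finset.Icc (-(j:ℤ)) (j:ℤ), Complex.exp (2*Real.pi*Complex.I/N) ^ (m * k)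
      = if (N:ℤ) ∣ k then (N:ℂ) else 0 := by
  have he := Complex.isPrimitiveRoot_exp N (by omega)
  set e : ℂ := Complex.exp (2*Real.pi*Complex.I/N) with hedef
  have he0 : e ≠ 0 := Complex.exp_ne_zero _
  have hmap : Finset.Icc (-(j:ℤ)) (j:ℤ)
      = Finset.map ⟨fun a : ℕ => (a:ℤ) - j, by
          have hinj : Function.Injective (fun a : ℕ => (a:ℤ) - j) := fun a b hab => by simpa using hab
          exact hinj⟩
          (Finset.range N) := by
    ext m
    simp only [Finset.mem_Icc, Finset.mem_map, Finset.mem_range,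
      Function.Embedding.coeFn_mk]
    constructor
    · intro h
      exact ⟨(m + j).toNat, by omega, by omega⟩
    · rintro ⟨a, ha, rfl⟩
      omega
  rw [hmap, Finset.sum_map]
  simp only [Function.Embedding.coeFn_mk]
  have hsplit : ∀ a : ℕ, e ^ (((a:ℤ) - j) * k) = e ^ ((a:ℤ) * k) * e ^ (-(j:ℤ) * k) := by
    intro a
    rw [← zpow_add₀ he0]
    ring_nf
  simp only [hsplit, ← Finset.sum_mul]
  rw [← Fin.sum_univ_eq_sum_range (fun a => e ^ ((a:ℤ) * k)), auxA' N (by omega) k]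
  by_cases h : (N:ℤ) ∣ k
  · have h1 : e ^ k = 1 := (he.zpow_eq_one_iff_dvd k).mpr h
    have : e ^ (-(j:ℤ) * k) = 1 := by
      rw [mul_comm, zpow_mul, h1, one_zpow]
    rw [this, mul_one]
  · simp [h]

private lemma neg_one_zpow_congr' {a b : ℤ} (h : Even (a - b)) : (-1:ℂ)^a = (-1:ℂ)^b := by
  obtain ⟨t, ht⟩ := h
  have hab : a = b + 2*t := by omega
  rw [hab, zpow_add₀ (by norm_num : (-1:ℂ) ≠ 0), zpow_mul,
    show ((2:ℤ)) = ((2:ℕ):ℤ) from rfl, zpow_natCast, neg_one_sq, one_zpow, mul_one]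

private lemma I_zpow_congr' {a b : ℤ} (h : (4:ℤ) ∣ (a - b)) :
    Complex.I ^ a = Complex.I ^ b := by
  obtain ⟨t, ht⟩ := h
  have hab : a = b + 4*t := by omega
  rw [hab, zpow_add₀ Complex.I_ne_zero, zpow_mul,
    show ((4:ℤ)) = ((4:ℕ):ℤ) from rfl, zpow_natCast, Complex.I_pow_four, one_zpow, mul_one]

private lemma key' (j N : ℕ) (hN : N = 2*j+1) (R : Fin N → Fin N → ℝ)
    (hR : ∀ a a', ∑ b, R a b * R a' b = if a = a' then (1 : ℝ) else 0)
    (m1 m2 : ℤ) (hm1 : -(j:ℤ) ≤ m1 ∧ m1 ≤ j) (hm2 : -(j:ℤ) ≤ m2 ∧ m2 ≤ j) :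
    ∑ m ∈ Finset.Icc (-(j:ℤ)) (j:ℤ),
      (∑ a : Fin N, ∑ b : Fin N, (R a b : ℂ) *
          (Complex.exp (2*Real.pi*Complex.I/N) ^ ((a:ℤ)*m1) *
           Complex.exp (2*Real.pi*Complex.I/N) ^ ((b:ℤ)*m))) *
      (∑ c : Fin N, ∑ d : Fin N, (R c d : ℂ) *
          (Complex.exp (2*Real.pi*Complex.I/N) ^ ((c:ℤ)*m2) *
           Complex.exp (2*Real.pi*Complex.I/N) ^ ((d:ℤ)*(-m))))
      = (N:ℂ)^2 * (if m1 = -m2 then 1 else 0) := by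
  set e : ℂ := Complex.exp (2*Real.pi*Complex.I/N) with hedef
  have he0 : e ≠ 0 := Complex.exp_ne_zero _
  have hauxA := auxA' N (by omega)
  have hauxB := auxB' j N hN
  rw [← hedef] at hauxA hauxB
  have hdvd1 : ∀ b d : Fin N, ((N:ℤ) ∣ ((b:ℤ) - (d:ℤ))) ↔ b = d := by
    intro b d
    constructor
    · intro h
      have hb := b.isLt
      have hd := d.isLt
      have := Int.eq_zero_of_abs_lt_dvd h (by rw [abs_lt]; omega)
      exact Fin.ext (by omega)
    · rintro rfl; simp
  have hdvd2 : ((N:ℤ) ∣ (m1 + m2)) ↔ m1 = -m2 := by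
    constructor
    · intro h
      have := Int.eq_zero_of_abs_lt_dvd h (by rw [abs_lt]; omega)
      omega
    · intro h; rw [h]; simp
  have hRC : ∀ a c : Fin N, ∑ b, (R a b : ℂ) * (R c b : ℂ) = if a = c then (1:ℂ) else 0 := by
    intro a c
    calc ∑ b, (R a b : ℂ) * (R c b : ℂ) = ((∑ b, R a b * R c b : ℝ) : ℂ) := by push_cast; rfl
    _ = (((if a = c then (1:ℝ) else 0) : ℝ) : ℂ) := by rw [hR]
    _ = _ := by simp [apply_ite]
  calc
    ∑ m ∈ Finset.Icc (-(j:ℤ)) (j:ℤ),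
      (∑ a : Fin N, ∑ b : Fin N, (R a b : ℂ) * (e ^ ((a:ℤ)*m1) * e ^ ((b:ℤ)*m))) *
      (∑ c : Fin N, ∑ d : Fin N, (R c d : ℂ) * (e ^ ((c:ℤ)*m2) * e ^ ((d:ℤ)*(-m))))
      = ∑ m ∈ Finset.Icc (-(j:ℤ)) (j:ℤ), ∑ a : Fin N, ∑ b : Fin N, ∑ c : Fin N, ∑ d : Fin N,
          ((R a b : ℂ) * (R c d : ℂ) * (e ^ ((a:ℤ)*m1) * e ^ ((c:ℤ)*m2))) *
            e ^ (m * ((b:ℤ) - (d:ℤ))) := by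
      refine Finset.sum_congr rfl fun m _ => ?_
      rw [Finset.sum_mul]
      refine Finset.sum_congr rfl fun a _ => ?_
      rw [Finset.sum_mul]
      refine Finset.sum_congr rfl fun b _ => ?_
      rw [Finset.mul_sum]
      refine Finset.sum_congr rfl fun c _ => ?_
      rw [Finset.mul_sum]
      refine Finset.sum_congr rfl fun d _ => ?_
      have h : m * ((b:ℤ) - (d:ℤ)) = (b:ℤ)*m + (d:ℤ)*(-m) := by ring
      rw [h, zpow_add₀ he0]
      ring
    _ = ∑ a : Fin N, ∑ b : Fin N, ∑ c : Fin N, ∑ d : Fin N,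
          ((R a b : ℂ) * (R c d : ℂ) * (e ^ ((a:ℤ)*m1) * e ^ ((c:ℤ)*m2))) *
            ∑ m ∈ Finset.Icc (-(j:ℤ)) (j:ℤ), e ^ (m * ((b:ℤ) - (d:ℤ))) := by
      rw [Finset.sum_comm]
      refine Finset.sum_congr rfl fun a _ => ?_
      rw [Finset.sum_comm]
      refine Finset.sum_congr rfl fun b _ => ?_
      rw [Finset.sum_comm]
      refine Finset.sum_congr rfl fun c _ => ?_
      rw [Finset.sum_comm]
      refine Finset.sum_congr rfl fun d _ => ?_
      rw [← Finset.mul_sum]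
    _ = ∑ a : Fin N, ∑ b : Fin N, ∑ c : Fin N,
          ((R a b : ℂ) * (R c b : ℂ) * (e ^ ((a:ℤ)*m1) * e ^ ((c:ℤ)*m2))) * N := by
      refine Finset.sum_congr rfl fun a _ => Finset.sum_congr rfl fun b _ =>
        Finset.sum_congr rfl fun c _ => ?_
      simp only [hauxB]
      rw [Finset.sum_eq_single b]
      · rw [if_pos (by simp)]
      · intro d _ hd
        rw [if_neg (fun hc => hd ((hdvd1 b d).mp hc).symm), mul_zero]
      · intro h; exact absurd (Finset.mem_univ b) h
    _ = ∑ a : Fin N, ∑ c : Fin N,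
          (∑ b : Fin N, (R a b : ℂ) * (R c b : ℂ)) * ((e ^ ((a:ℤ)*m1) * e ^ ((c:ℤ)*m2)) * N) := by
      refine Finset.sum_congr rfl fun a _ => ?_
      rw [Finset.sum_comm]
      refine Finset.sum_congr rfl fun c _ => ?_
      rw [Finset.sum_mul]
      refine Finset.sum_congr rfl fun b _ => ?_
      ring
    _ = ∑ a : Fin N, (e ^ ((a:ℤ)*m1) * e ^ ((a:ℤ)*m2)) * N := by
      refine Finset.sum_congr rfl fun a _ => ?_
      simp [hRC, ite_mul]
    _ = (∑ a : Fin N, e ^ ((a:ℤ)*(m1+m2))) * N := by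
      rw [Finset.sum_mul]
      refine Finset.sum_congr rfl fun a _ => ?_
      have h : (a:ℤ)*(m1+m2) = (a:ℤ)*m1 + (a:ℤ)*m2 := by ring
      rw [h, zpow_add₀ he0]
    _ = (if (N:ℤ) ∣ (m1+m2) then (N:ℂ) else 0) * N := by
      rw [hauxA]
    _ = (N:ℂ)^2 * (if m1 = -m2 then 1 else 0) := by
      by_cases h : m1 = -m2
      · simp [hdvd2, h]; ring
      · simp [hdvd2, h]

/-- The discrete Fourier transform of an orthogonal matrix `R ∈ O(N)` is orthogonal with
respect to the `SU(2)`-invariant metric `g^{m₁m₂} = (-1)^{j-m₁} δ_{m₁,-m₂}`: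
`Σ_{m∈M} (-1)^{j-m} t_R(m₁,m) t_R(m₂,-m) = (1/N²)(-1)^{j-m₁} δ_{m₁,-m₂}`. -/
theorem fourier_orthogonality (j N : ℕ) (hN : N = 2 * j + 1)
    (R : Fin N → Fin N → ℝ)
    (hR : ∀ a a', ∑ b, R a b * R a' b = if a = a' then (1 : ℝ) else 0)
    (tR : ℤ → ℤ → ℂ)
    (htR : tR = fun m1 m2 =>
      (N : ℂ) ^ (-2 : ℤ) * Complex.I ^ (-(2 * (j : ℤ) - |m1| - |m2|)) *
        ∑ a : Fin N, ∑ b : Fin N,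
          (R a b : ℂ) * Complex.exp ((2 * (Real.pi : ℂ) * Complex.I / (N : ℂ)) *
            (((a : ℕ) : ℂ) * (m1 : ℂ) + ((b : ℕ) : ℂ) * (m2 : ℂ)))) :
    ∀ m1 ∈ Finset.Icc (-(j : ℤ)) (j : ℤ), ∀ m2 ∈ Finset.Icc (-(j : ℤ)) (j : ℤ),
      ∑ m ∈ Finset.Icc (-(j : ℤ)) (j : ℤ),
        (-1 : ℂ) ^ ((j : ℤ) - m) * (tR m1 m * tR m2 (-m))
        = 1 / (N : ℂ) ^ 2 * (-1 : ℂ) ^ ((j : ℤ) - m1) *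
            (if m1 = -m2 then 1 else 0) := by
  intro m1 hm1 m2 hm2
  rw [Finset.mem_Icc] at hm1 hm2
  have hN0 : (N:ℂ) ≠ 0 := by
    simp only [Ne, Nat.cast_eq_zero]; omega
  have hI0 : Complex.I ≠ 0 := Complex.I_ne_zero
  have he0 : Complex.exp (2*Real.pi*Complex.I/N) ≠ 0 := Complex.exp_ne_zero _
  set C : ℤ → ℤ → ℂ :=
    fun x y => (N:ℂ)^(-2:ℤ) * Complex.I ^ (-(2*(j:ℤ) - |x| - |y|)) with hC
  set S : ℤ → ℤ → ℂ := fun x y => ∑ a : Fin N, ∑ b : Fin N,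
    (R a b : ℂ) * (Complex.exp (2*Real.pi*Complex.I/N) ^ ((a:ℤ)*x) *
      Complex.exp (2*Real.pi*Complex.I/N) ^ ((b:ℤ)*y)) with hS
  have htR' : ∀ x y : ℤ, tR x y = C x y * S x y := by
    intro x y
    rw [htR]
    simp only [hC, hS]
    congr 1
    refine Finset.sum_congr rfl fun a _ => Finset.sum_congr rfl fun b _ => ?_
    congr 1
    rw [mul_add, Complex.exp_add]
    congr 1
    · rw [show (2*(Real.pi:ℂ)*Complex.I/(N:ℂ)) * (((a:ℕ):ℂ) * (x:ℂ))
          = (((a:ℤ)*x : ℤ):ℂ) * (2*(Real.pi:ℂ)*Complex.I/(N:ℂ)) by push_cast; ring,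
        Complex.exp_int_mul]
    · rw [show (2*(Real.pi:ℂ)*Complex.I/(N:ℂ)) * (((b:ℕ):ℂ) * (y:ℂ))
          = (((b:ℤ)*y : ℤ):ℂ) * (2*(Real.pi:ℂ)*Complex.I/(N:ℂ)) by push_cast; ring,
        Complex.exp_int_mul]
  have hpre : ∀ m : ℤ, (-1:ℂ)^((j:ℤ)-m) * (C m1 m * C m2 (-m))
      = (N:ℂ)^(-4:ℤ) * Complex.I ^ (|m1| + |m2| - 2*(j:ℤ)) := by
    intro m
    rw [hC]
    simp only [abs_neg]
    have h1 : (-1:ℂ)^((j:ℤ)-m) = Complex.I ^ (2*((j:ℤ)-m)) := by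
      rw [zpow_mul, show ((2:ℤ)) = ((2:ℕ):ℤ) from rfl, zpow_natCast, Complex.I_sq]
    rw [h1]
    rw [show Complex.I ^ (2*((j:ℤ)-m)) *
        ((N:ℂ)^(-2:ℤ) * Complex.I ^ (-(2*(j:ℤ) - |m1| - |m|)) *
         ((N:ℂ)^(-2:ℤ) * Complex.I ^ (-(2*(j:ℤ) - |m2| - |m|))))
        = ((N:ℂ)^(-2:ℤ) * (N:ℂ)^(-2:ℤ)) *
          (Complex.I ^ (2*((j:ℤ)-m)) * Complex.I ^ (-(2*(j:ℤ) - |m1| - |m|)) *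
            Complex.I ^ (-(2*(j:ℤ) - |m2| - |m|))) from by ring]
    rw [← zpow_add₀ hN0, ← zpow_add₀ hI0, ← zpow_add₀ hI0]
    congr 1
    refine I_zpow_congr' ?_
    rcases abs_cases m with ⟨hm, _⟩ | ⟨hm, _⟩
    · rw [hm]; exact ⟨0, by ring⟩
    · rw [hm]; exact ⟨-m, by ring⟩
  have hkey : ∑ m ∈ Finset.Icc (-(j:ℤ)) (j:ℤ), S m1 m * S m2 (-m)
      = (N:ℂ)^2 * (if m1 = -m2 then 1 else 0) := by
    rw [hS]
    exact key' j N hN R hR m1 m2 hm1 hm2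
  calc
    ∑ m ∈ Finset.Icc (-(j:ℤ)) (j:ℤ), (-1:ℂ)^((j:ℤ)-m) * (tR m1 m * tR m2 (-m))
      = ∑ m ∈ Finset.Icc (-(j:ℤ)) (j:ℤ),
          ((N:ℂ)^(-4:ℤ) * Complex.I ^ (|m1| + |m2| - 2*(j:ℤ))) * (S m1 m * S m2 (-m)) := by
      refine Finset.sum_congr rfl fun m _ => ?_
      rw [htR' m1 m, htR' m2 (-m),
        show (-1:ℂ)^((j:ℤ)-m) * ((C m1 m * S m1 m) * (C m2 (-m) * S m2 (-m)))
          = ((-1:ℂ)^((j:ℤ)-m) * (C m1 m * C m2 (-m))) * (S m1 m * S m2 (-m)) from by ring,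
        hpre m]
    _ = ((N:ℂ)^(-4:ℤ) * Complex.I ^ (|m1| + |m2| - 2*(j:ℤ))) *
          ∑ m ∈ Finset.Icc (-(j:ℤ)) (j:ℤ), S m1 m * S m2 (-m) := by
      rw [Finset.mul_sum]
    _ = ((N:ℂ)^(-4:ℤ) * Complex.I ^ (|m1| + |m2| - 2*(j:ℤ))) *
          ((N:ℂ)^2 * (if m1 = -m2 then 1 else 0)) := by rw [hkey]
    _ = 1 / (N : ℂ) ^ 2 * (-1 : ℂ) ^ ((j : ℤ) - m1) * (if m1 = -m2 then 1 else 0) := by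
      by_cases h : m1 = -m2
      · have habs : |m2| = |m1| := by rw [h, abs_neg]
        rw [habs, if_pos h]
        have hIpow : Complex.I ^ (|m1| + |m1| - 2*(j:ℤ)) = (-1:ℂ)^((j:ℤ) - m1) := by
          rw [show |m1| + |m1| - 2*(j:ℤ) = 2 * (|m1| - (j:ℤ)) from by ring,
            zpow_mul, show ((2:ℤ)) = ((2:ℕ):ℤ) from rfl, zpow_natCast, Complex.I_sq]
          refine neg_one_zpow_congr' ?_
          have : |m1| - (j:ℤ) - ((j:ℤ) - m1) = (|m1| + m1) - 2*(j:ℤ) := by ring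
          rw [this]
          rcases abs_cases m1 with ⟨hm, _⟩ | ⟨hm, _⟩
          · exact ⟨m1 - j, by omega⟩
          · exact ⟨-j, by omega⟩
        rw [hIpow]
        rw [show ((-4:ℤ)) = -((4:ℕ):ℤ) from rfl, zpow_neg, zpow_natCast]
        field_simp
      · rw [if_neg h]
        ring
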